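/- Every infinite word obtained as an infinite block product ⨂_{k=0}^∞ u_k of nonempty binary words u_k, each beginning with 0 for k ≥ 1, is almost periodic. -/

import Mathlib

/-- The word `u` occurs in the sequence `x` at position `i`. -/
def occursAt {A : Type*} (x : ℕ → A) (u : List A) (i : ℕ) : Prop :=
  ∀ j : Fin u.length, x (i + (j : ℕ)) = u.get j

/-- A sequence is almost periodic (uniformly recurrent) if every factor
occurs in every sufficiently long window. -/
def AlmostPeriodic {A : Type*} (x : ℕ → A) : Prop :=
  ∀ u : List A, (∃ i, occursAt x u i) →
    ∃ l : ℕ, ∀ i : ℕ, ∃ j : ℕ, i ≤ j ∧ j + u.length ≤ i + l ∧ occursAt x u j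

/-- Bitwise complement of a binary word. -/
def complWord (u : List (Fin 2)) : List (Fin 2) := u.map (fun b => 1 - b)

/-- The block product `u ⊗ v`, defined by `u ⊗ Λ = Λ`,
`u ⊗ (v·0) = (u ⊗ v)·u`, `u ⊗ (v·1) = (u ⊗ v)·ū`. -/
def blockProd (u v : List (Fin 2)) : List (Fin 2) :=
  v.foldl (fun acc c => acc ++ (if c = 0 then u else complWord u)) []

/-- The finite block products `⨂_{k=0}^n u_k`. -/
def partialBlockProd (u : ℕ → List (Fin 2)) : ℕ → List (Fin 2)
  | 0 => u 0
  | n + 1 => blockProd (partialBlockProd u n) (u (n + 1))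

lemma fold_shift (g : Fin 2 → List (Fin 2)) (v : List (Fin 2)) :
    ∀ a : List (Fin 2), v.foldl (fun acc c => acc ++ g c) a
      = a ++ v.foldl (fun acc c => acc ++ g c) [] := by
  induction v with
  | nil => simp
  | cons c v ih =>
    intro a
    simp only [List.foldl_cons]
    rw [ih (a ++ g c), ih ([] ++ g c)]
    simp

lemma bp_nil (U : List (Fin 2)) : blockProd U [] = [] := rfl

lemma bp_cons (U : List (Fin 2)) (c : Fin 2) (v : List (Fin 2)) :
    blockProd U (c :: v) = (if c = 0 then U else complWord U) ++ blockProd U v := by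
  unfold blockProd
  simp only [List.foldl_cons]
  rw [fold_shift]
  simp

lemma complWord_length (U : List (Fin 2)) : (complWord U).length = U.length :=
  List.length_map _

lemma bp_length (U v : List (Fin 2)) : (blockProd U v).length = U.length * v.length := by
  induction v with
  | nil => simp [bp_nil]
  | cons c v ih =>
    rw [bp_cons, List.length_append, ih]
    split <;> simp [complWord_length] <;> ring

lemma idx_lt {a b q r : ℕ} (hq : q < b) (hr : r < a) : q * a + r < a * b := by
  have h3 : (q + 1) * a ≤ b * a := Nat.mul_le_mul_right a hq
  have h4 : b * a = a * b := Nat.mul_comm b a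
  nlinarith

lemma bp_get (U : List (Fin 2)) (v : List (Fin 2)) (q r : ℕ) (hq : q < v.length)
    (hr : r < U.length) (h : q * U.length + r < (blockProd U v).length) :
    (blockProd U v)[q * U.length + r]'h = U[r]'hr + v[q]'hq := by
  induction v generalizing q with
  | nil => simp at hq
  | cons c v ih =>
    rcases q with _ | q
    · simp only [bp_cons] at h ⊢
      have hb : r < (if c = 0 then U else complWord U).length := by
        split <;> simp [complWord_length, hr]
      rw [List.getElem_append_left (by simpa using hb)]
      rcases (by decide : ∀ b : Fin 2, b = 0 ∨ b = 1) c with hc | hc <;> subst hc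
      · simp
      · simp only [if_neg (show ¬(1 : Fin 2) = 0 by decide)]
        simp only [complWord]
        rw [List.getElem_map]
        have h1 : ∀ b : Fin 2, 1 - b = b + 1 := by decide
        simp [h1]
    · have hlen : (if c = 0 then U else complWord U).length = U.length := by
        split <;> simp [complWord_length]
      have hidx : (q + 1) * U.length + r = U.length + (q * U.length + r) := by ring
      simp only [bp_cons, hidx] at h ⊢
      rw [List.getElem_append_right (by omega)]
      have h2 : q * U.length + r < (blockProd U v).length := by
        rw [bp_length]; exact idx_lt (by simpa using hq) hr
      have := ih q (by simpa using hq) (by simpa [hlen] using h)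
      simp only [hlen, Nat.add_sub_cancel_left] at *
      rw [this]
      simp

lemma complWord_append (U V : List (Fin 2)) :
    complWord (U ++ V) = complWord U ++ complWord V := List.map_append

lemma complWord_complWord (U : List (Fin 2)) : complWord (complWord U) = U := by
  simp only [complWord, List.map_map]
  have : ((fun b : Fin 2 => 1 - b) ∘ fun b : Fin 2 => 1 - b) = id := by
    funext b; revert b; decide
  simp [this]

lemma bp_append (U v w : List (Fin 2)) :
    blockProd U (v ++ w) = blockProd U v ++ blockProd U w := by
  induction v with
  | nil => simp [bp_nil]
  | cons c v ih => simp [bp_cons, ih, List.append_assoc]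

lemma complWord_cons (c : Fin 2) (v : List (Fin 2)) :
    complWord (c :: v) = (1 - c) :: complWord v := rfl

lemma bp_compl_right (U v : List (Fin 2)) :
    blockProd U (complWord v) = complWord (blockProd U v) := by
  induction v with
  | nil => simp [bp_nil, complWord]
  | cons c v ih =>
    rw [complWord_cons, bp_cons, bp_cons, complWord_append, ih]
    rcases (by decide : ∀ b : Fin 2, b = 0 ∨ b = 1) c with hc | hc <;> subst hc
    · simp [if_neg (show ¬(1 - 0 : Fin 2) = 0 by decide)]
    · simp [if_pos (show (1 - 1 : Fin 2) = 0 by decide),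
        if_neg (show ¬(1 : Fin 2) = 0 by decide), complWord_complWord]

lemma bp_assoc (A B C : List (Fin 2)) :
    blockProd (blockProd A B) C = blockProd A (blockProd B C) := by
  induction C with
  | nil => simp [bp_nil]
  | cons c C ih =>
    rw [bp_cons, bp_cons, bp_append, ih]
    rcases (by decide : ∀ b : Fin 2, b = 0 ∨ b = 1) c with hc | hc <;> subst hc
    · simp
    · simp [if_neg (show ¬(1 : Fin 2) = 0 by decide), bp_compl_right]

lemma bp_single (U : List (Fin 2)) : blockProd U [0] = U := by
  rw [bp_cons, bp_nil]; simp

/-- The level-`n` sign word at stage `m`. -/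
def sgnW (u : ℕ → List (Fin 2)) (n : ℕ) : ℕ → List (Fin 2)
  | 0 => [0]
  | m + 1 => if m + 1 ≤ n then [0] else blockProd (sgnW u n m) (u (m + 1))

lemma sgnW_self (u : ℕ → List (Fin 2)) (n : ℕ) : sgnW u n n = [0] := by
  cases n with
  | zero => rfl
  | succ m => simp [sgnW]

lemma P_eq (u : ℕ → List (Fin 2)) (n : ℕ) :
    ∀ m, n ≤ m → partialBlockProd u m = blockProd (partialBlockProd u n) (sgnW u n m) := by
  intro m
  induction m with
  | zero =>
    intro h
    interval_cases n
    rw [sgnW_self, bp_single]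
  | succ m ih =>
    intro h
    rcases Nat.lt_or_ge n (m + 1) with h1 | h1
    · have hn : n ≤ m := by omega
      rw [show sgnW u n (m + 1) = blockProd (sgnW u n m) (u (m + 1)) from by
        simp [sgnW, show ¬ m + 1 ≤ n by omega]]
      rw [← bp_assoc, ← ih hn]
      rfl
    · have : n = m + 1 := by omega
      subst this
      rw [sgnW_self, bp_single]

lemma P_len_pos (u : ℕ → List (Fin 2)) (hne : ∀ k, u k ≠ []) (m : ℕ) :
    0 < (partialBlockProd u m).length := by
  induction m with
  | zero => exact List.length_pos_iff.2 (hne 0)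
  | succ m ih =>
    show 0 < (blockProd _ _).length
    rw [bp_length]
    exact Nat.mul_pos ih (List.length_pos_iff.2 (hne (m + 1)))

lemma P_len_mono (u : ℕ → List (Fin 2)) (hne : ∀ k, u k ≠ []) {a b : ℕ} (h : a ≤ b) :
    (partialBlockProd u a).length ≤ (partialBlockProd u b).length := by
  induction b with
  | zero => interval_cases a; rfl
  | succ b ih =>
    rcases Nat.lt_or_ge a (b + 1) with h1 | h1
    · refine le_trans (ih (by omega)) ?_
      show _ ≤ (blockProd _ _).length
      rw [bp_length]
      have := List.length_pos_iff.2 (hne (b + 1))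
      nlinarith
    · have : a = b + 1 := by omega
      subst this; rfl

lemma bp_allzero {U v : List (Fin 2)} (hU : ∀ c ∈ U, c = 0) (hv : ∀ c ∈ v, c = (0 : Fin 2)) :
    ∀ c ∈ blockProd U v, c = 0 := by
  induction v with
  | nil => simp [bp_nil]
  | cons c v ih =>
    rw [bp_cons]
    have hc : c = 0 := hv c List.mem_cons_self
    intro d hd
    rcases List.mem_append.1 hd with h | h
    · rw [if_pos hc] at h; exact hU d h
    · exact ih (fun e he => hv e (List.mem_cons_of_mem _ he)) d h

lemma sgnW_allzero (u : ℕ → List (Fin 2)) (n : ℕ) :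
    ∀ m, n ≤ m → (∀ k, n < k → k ≤ m → ∀ c ∈ u k, c = (0 : Fin 2)) →
      ∀ c ∈ sgnW u n m, c = 0 := by
  intro m
  induction m with
  | zero =>
    intro h _
    interval_cases n
    simp [sgnW]
  | succ m ih =>
    intro h hall
    rcases Nat.lt_or_ge n (m + 1) with h1 | h1
    · rw [show sgnW u n (m + 1) = blockProd (sgnW u n m) (u (m + 1)) from by
        simp [sgnW, show ¬ m + 1 ≤ n by omega]]
      exact bp_allzero (ih (by omega) (fun k hk hk' => hall k hk (by omega)))
        (hall (m + 1) h1 le_rfl)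
    · have : n = m + 1 := by omega
      subst this
      rw [sgnW_self]
      simp

/-- Any infinite word obtained as an infinite block product of nonempty binary
words, each beginning with `0` for `k ≥ 1`, is almost periodic.  The infinite
word `x` is the limit of the chain of prefixes `⨂_{k=0}^n u_k`. -/
theorem blockProd_almostPeriodic (u : ℕ → List (Fin 2))
    (hne : ∀ k, u k ≠ []) (h0 : ∀ k, 1 ≤ k → (u k).head? = some 0)
    (x : ℕ → Fin 2)
    (hpref : ∀ n, occursAt x (partialBlockProd u n) 0)
    (hlen : ∀ m : ℕ, ∃ n : ℕ, m ≤ (partialBlockProd u n).length) :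
    AlmostPeriodic x := by
  classical
  rintro w ⟨i0, hi0⟩
  obtain ⟨n, hn⟩ := hlen (i0 + w.length)
  have xg : ∀ m k (h : k < (partialBlockProd u m).length), x k = (partialBlockProd u m)[k]'h := by
    intro m k h
    have := hpref m ⟨k, h⟩
    simpa using this
  have hwv : ∀ j (hj : j < w.length), w[j]'hj = (partialBlockProd u n)[i0 + j]'(by omega) := by
    intro j hj
    have h1 := hi0 ⟨j, hj⟩
    have h2 := xg n (i0 + j) (by omega)
    simp only [List.get_eq_getElem] at h1
    rw [← h1, h2]
  have two_cases : ∀ b : Fin 2, b = 0 ∨ b = 1 := by decide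
  have key : ∃ r, n ≤ r ∧ ∀ m, r ≤ m → ∀ Q (hQ : Q < (sgnW u r m).length),
      ∃ a, ∃ ha : a < (sgnW u n r).length,
        ((sgnW u n r)[a]'ha) + ((sgnW u r m)[Q]'hQ) = 0 := by
    by_cases hz : ∀ k, n < k → ∀ c ∈ u k, c = (0 : Fin 2)
    · refine ⟨n, le_rfl, fun m hm Q hQ => ?_⟩
      have hS : (sgnW u n m)[Q]'hQ = 0 :=
        sgnW_allzero u n m hm (fun k hk _ => hz k hk) _ (List.getElem_mem _)
      refine ⟨0, by simp [sgnW_self], ?_⟩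
      rw [hS]
      simp [sgnW_self]
    · push_neg at hz
      obtain ⟨k0, hk0, c0, hc0mem, hc0⟩ := hz
      have hc1 : c0 = 1 := by
        rcases two_cases c0 with h | h
        · exact absurd h hc0
        · exact h
      have hex : ∃ k, n < k ∧ (1 : Fin 2) ∈ u k := ⟨k0, hk0, hc1 ▸ hc0mem⟩
      set r := Nat.find hex with hrdef
      obtain ⟨hnr, h1r⟩ := Nat.find_spec hex
      have hmin : ∀ k, n < k → k < r → ∀ c ∈ u k, c = (0 : Fin 2) := by
        intro k hk hkr c hc
        have := Nat.find_min hex hkr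
        rcases two_cases c with h | h
        · exact h
        · exact absurd ⟨hk, h ▸ hc⟩ this
      set Z := sgnW u n (r - 1) with hZdef
      have hZzero : ∀ c ∈ Z, c = 0 :=
        sgnW_allzero u n (r - 1) (by omega) (fun k hk hk' => hmin k hk (by omega))
      have hZpos : 0 < Z.length := by
        have h1 := P_eq u n (r - 1) (by omega)
        have h2 := P_len_pos u hne (r - 1)
        rw [h1, bp_length] at h2
        rcases Nat.eq_zero_or_pos Z.length with h | h
        · rw [← hZdef] at h2; rw [h] at h2; simp at h2
        · exact h
      have hW : sgnW u n r = blockProd Z (u r) := by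
        obtain ⟨s, hs⟩ : ∃ s, r = s + 1 := ⟨r - 1, by omega⟩
        have hz2 : Z = sgnW u n s := by rw [hZdef, hs]; norm_num
        rw [hz2, hs]
        simp [sgnW, show ¬ (s + 1 ≤ n) from by omega]
      have hWval : ∀ q (hq : q < (u r).length),
          ∃ h : q * Z.length < (sgnW u n r).length,
            (sgnW u n r)[q * Z.length]'h = (u r)[q]'hq := by
        intro q hq
        have hb : q * Z.length + 0 < (blockProd Z (u r)).length := by
          rw [bp_length]; exact idx_lt hq hZpos
        have hg := bp_get Z (u r) q 0 hq hZpos hb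
        have hZ0 : Z[0]'hZpos = 0 := hZzero _ (List.getElem_mem _)
        rw [hZ0, zero_add] at hg
        refine ⟨by rw [hW]; simpa using hb, ?_⟩
        simp only [hW]
        simpa using hg
      have hur0 : ∃ h : 0 < (u r).length, (u r)[0]'h = 0 := by
        have := h0 r (by omega)
        rcases hur : u r with _ | ⟨a, l⟩
        · exact absurd hur (hne r)
        · rw [hur] at this
          simp only [List.head?] at this
          refine ⟨by simp, ?_⟩
          simp [Option.some_inj.1 this]
      obtain ⟨hur0len, hur00⟩ := hur0
      obtain ⟨q1, hq1, hq1v⟩ := List.mem_iff_getElem.1 h1r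
      refine ⟨r, by omega, fun m hm Q hQ => ?_⟩
      rcases two_cases ((sgnW u r m)[Q]'hQ) with hσ | hσ
      · obtain ⟨ha, hv⟩ := hWval 0 hur0len
        refine ⟨0 * Z.length, ha, ?_⟩
        rw [hv, hσ, hur00, add_zero]
      · obtain ⟨ha, hv⟩ := hWval q1 hq1
        refine ⟨q1 * Z.length, ha, ?_⟩
        rw [hv, hσ, hq1v]
        decide
  obtain ⟨r, hnr, hkey⟩ := key
  have hBW : partialBlockProd u r = blockProd (partialBlockProd u n) (sgnW u n r) :=
    P_eq u n r hnr
  set B := partialBlockProd u r with hBdef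
  set W := sgnW u n r with hWdef
  set L := (partialBlockProd u n).length with hLdef
  have hLB : B.length = L * W.length := by rw [hBW, bp_length]
  have hLpos : 0 < L := P_len_pos u hne n
  have hBpos : 0 < B.length := P_len_pos u hne r
  have hWpos : 0 < W.length := by
    rcases Nat.eq_zero_or_pos W.length with h | h
    · rw [h, Nat.mul_zero] at hLB; omega
    · exact h
  refine ⟨2 * B.length, fun i => ?_⟩
  set Q := i / B.length + 1 with hQdef
  obtain ⟨m0, hm0⟩ := hlen ((Q + 1) * B.length)
  set m := max r m0 with hmdef
  have hrm : r ≤ m := le_max_left _ _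
  have hPm : (Q + 1) * B.length ≤ (partialBlockProd u m).length :=
    le_trans hm0 (P_len_mono u hne (le_max_right _ _))
  have hPmS : partialBlockProd u m = blockProd B (sgnW u r m) := P_eq u r m hrm
  have hPmlen : (partialBlockProd u m).length = B.length * (sgnW u r m).length := by
    rw [hPmS, bp_length]
  have hQS : Q < (sgnW u r m).length := by
    by_contra hc
    push_neg at hc
    have h1 : B.length * (sgnW u r m).length ≤ B.length * Q := Nat.mul_le_mul_left _ hc
    nlinarith
  obtain ⟨a, ha, hsum⟩ := hkey m hrm Q hQS
  have hdiv := Nat.div_add_mod i B.length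
  have hmod := Nat.mod_lt i hBpos
  have hcomm : B.length * (i / B.length) = (i / B.length) * B.length := Nat.mul_comm _ _
  have hQB : Q * B.length = (i / B.length) * B.length + B.length := by rw [hQdef]; ring
  have hoff : a * L + i0 + w.length ≤ B.length := by
    have h2 : a + 1 ≤ W.length := ha
    nlinarith
  refine ⟨Q * B.length + (a * L + i0), by omega, by
    have hQB2 : (Q + 1) * B.length = Q * B.length + B.length := by ring
    omega, ?_⟩
  intro jj
  have hjj : (jj : ℕ) < w.length := jj.isLt
  have hQB2 : (Q + 1) * B.length = Q * B.length + B.length := by ring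
  have hidx : Q * B.length + (a * L + i0) + (jj : ℕ) < (partialBlockProd u m).length := by
    omega
  rw [xg m _ hidx]
  have hinner : a * L + (i0 + (jj : ℕ)) < B.length := by omega
  have hidx2 : Q * B.length + (a * L + i0) + (jj : ℕ)
      = Q * B.length + (a * L + (i0 + (jj : ℕ))) := by omega
  have hbig : Q * B.length + (a * L + (i0 + (jj : ℕ))) < (blockProd B (sgnW u r m)).length := by
    rw [bp_length]; exact idx_lt hQS hinner
  have e1 : (partialBlockProd u m)[Q * B.length + (a * L + i0) + (jj : ℕ)]'hidx
      = B[a * L + (i0 + (jj : ℕ))]'hinner + (sgnW u r m)[Q]'hQS := by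
    simp only [hidx2, hPmS]
    exact bp_get B (sgnW u r m) Q _ hQS hinner hbig
  have hin2 : i0 + (jj : ℕ) < L := by omega
  have hbig2 : a * L + (i0 + (jj : ℕ)) < (blockProd (partialBlockProd u n) W).length := by
    rw [bp_length]; exact idx_lt ha hin2
  have e2 : B[a * L + (i0 + (jj : ℕ))]'hinner
      = (partialBlockProd u n)[i0 + (jj : ℕ)]'hin2 + W[a]'ha := by
    simp only [hBW]
    exact bp_get (partialBlockProd u n) W a (i0 + (jj : ℕ)) ha hin2 hbig2
  rw [e1, e2, add_assoc, hsum, add_zero]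
  have := hwv (jj : ℕ) hjj
  simp only [List.get_eq_getElem]
  rw [this]
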